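/- Let φ be any norm on ℝ^d, let Σ be a positive definite d×d real matrix with centered Gaussian measure μ_Σ, and let c > 0. Define G(x) := μ_Σ{ω ∈ ℝ^d : φ(ω + x) ≤ c}. Then for every t ∈ ℝ, μ_Σ{x ∈ ℝ^d : G(x) = t} = 0; that is, the pushforward of μ_Σ under G has no atoms. -/

import Mathlib

open MeasureTheory Matrix Filter
open scoped ENNReal

/-- Centered Gaussian density on `ℝ^d` with covariance matrix `S`:
`f_S(x) = ((2π)^d det S)^(−1/2) · exp(−(1/2) xᵀ S⁻¹ x)`. -/
noncomputable def gaussDensity {d : ℕ} (S : Matrix (Fin d) (Fin d) ℝ) (x : Fin d → ℝ) : ℝ :=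
  (Real.sqrt ((2 * Real.pi) ^ d * S.det))⁻¹ *
    Real.exp (-(1 / 2) * (x ⬝ᵥ (S⁻¹ *ᵥ x)))

/-- Centered Gaussian measure on `ℝ^d`: the measure with density `gaussDensity S`
with respect to Lebesgue measure. -/
noncomputable def gaussMeasure {d : ℕ} (S : Matrix (Fin d) (Fin d) ℝ) :
    Measure (Fin d → ℝ) :=
  volume.withDensity fun x => ENNReal.ofReal (gaussDensity S x)

/-- `φ` is a norm on `ℝ^d`: point-separating, absolutely homogeneous, subadditive. -/
structure IsNorm {d : ℕ} (φ : (Fin d → ℝ) → ℝ) : Prop where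
  eq_zero : ∀ x, φ x = 0 → x = 0
  smul : ∀ (a : ℝ) (x : Fin d → ℝ), φ (a • x) = |a| * φ x
  triangle : ∀ x y : Fin d → ℝ, φ (x + y) ≤ φ x + φ y

open scoped Topology

namespace IsNorm
variable {d : ℕ} {φ : (Fin d → ℝ) → ℝ} (hφ : IsNorm φ)
include hφ

lemma zero : φ 0 = 0 := by
  have := hφ.smul 0 0; simpa using this

lemma neg (x : Fin d → ℝ) : φ (-x) = φ x := by
  have := hφ.smul (-1) x; simpa using this

lemma nonneg (x : Fin d → ℝ) : 0 ≤ φ x := by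
  have h := hφ.triangle x (-x)
  rw [add_neg_cancel, hφ.zero, hφ.neg] at h
  linarith

lemma pos {x : Fin d → ℝ} (hx : x ≠ 0) : 0 < φ x :=
  lt_of_le_of_ne (hφ.nonneg x) fun h => hx (hφ.eq_zero x h.symm)

lemma sub_le (x y : Fin d → ℝ) : φ x - φ y ≤ φ (x - y) := by
  have := hφ.triangle (x - y) y
  simp only [sub_add_cancel] at this
  linarith

lemma abs_sub_le (x y : Fin d → ℝ) : |φ x - φ y| ≤ φ (x - y) := by
  rcases abs_cases (φ x - φ y) with ⟨h, _⟩ | ⟨h, _⟩ <;> rw [h]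
  · exact hφ.sub_le x y
  · have := hφ.sub_le y x
    rw [← hφ.neg (y - x)] at this
    simpa [neg_sub] using this

lemma sum_le {ι : Type*} (s : Finset ι) (g : ι → Fin d → ℝ) :
    φ (∑ i ∈ s, g i) ≤ ∑ i ∈ s, φ (g i) := by
  classical
  induction s using Finset.induction with
  | empty => simp [hφ.zero]
  | insert _ _ h ih =>
    rw [Finset.sum_insert h, Finset.sum_insert h]
    exact (hφ.triangle _ _).trans (by linarith)

lemma le_K : ∃ K > 0, ∀ x, φ x ≤ K * ‖x‖ := by
  have hK0 : 0 ≤ ∑ i : Fin d, φ ((Pi.single i 1 : Fin d → ℝ)) :=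
    Finset.sum_nonneg fun i _ => hφ.nonneg _
  refine ⟨(∑ i : Fin d, φ ((Pi.single i 1 : Fin d → ℝ))) + 1, by linarith, fun x => ?_⟩
  have hx : x = ∑ i : Fin d, x i • (Pi.single i 1 : Fin d → ℝ) := by
    ext j; simp [Pi.single_apply]
  calc φ x ≤ ∑ i : Fin d, φ (x i • (Pi.single i 1 : Fin d → ℝ)) := by
        nth_rewrite 1 [hx]; exact hφ.sum_le _ _
    _ = ∑ i : Fin d, |x i| * φ ((Pi.single i 1 : Fin d → ℝ)) := by simp [hφ.smul]
    _ ≤ ∑ i : Fin d, ‖x‖ * φ ((Pi.single i 1 : Fin d → ℝ)) := by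
        refine Finset.sum_le_sum fun i _ => ?_
        exact mul_le_mul_of_nonneg_right (by simpa using norm_le_pi_norm x i) (hφ.nonneg _)
    _ = (∑ i : Fin d, φ ((Pi.single i 1 : Fin d → ℝ))) * ‖x‖ := by
        rw [Finset.sum_mul]; exact Finset.sum_congr rfl fun i _ => mul_comm _ _
    _ ≤ _ := by nlinarith [norm_nonneg x]

lemma continuous : Continuous φ := by
  obtain ⟨K, hK, hle⟩ := hφ.le_K
  have : LipschitzWith (Real.toNNReal K) φ := by
    refine LipschitzWith.of_dist_le_mul fun x y => ?_
    rw [Real.dist_eq, Real.coe_toNNReal K hK.le, dist_eq_norm]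
    exact (hφ.abs_sub_le x y).trans (hle _)
  exact this.continuous

end IsNorm

/-- A continuous function positive away from `0` has a positive minimum on the unit sphere. -/
lemma exists_sphere_min {d : ℕ} (hd : 0 < d) (ψ : (Fin d → ℝ) → ℝ)
    (hcont : Continuous ψ) (hpos : ∀ x, x ≠ 0 → 0 < ψ x) :
    ∃ m > 0, ∀ x : Fin d → ℝ, ‖x‖ = 1 → m ≤ ψ x := by
  have hne : (Metric.sphere (0 : Fin d → ℝ) 1).Nonempty := by
    refine ⟨(Pi.single ⟨0, hd⟩ 1 : Fin d → ℝ), ?_⟩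
    simp [Pi.norm_single]
  obtain ⟨x₀, hx₀, hmin⟩ :=
    (isCompact_sphere (0 : Fin d → ℝ) 1).exists_isMinOn hne hcont.continuousOn
  refine ⟨ψ x₀, hpos x₀ ?_, fun x hx => hmin (by simpa using hx)⟩
  intro h; rw [h] at hx₀; simp at hx₀

/-- Lower bound `m‖x‖^k ≤ ψ x` for continuous positively `k`-homogeneous positive functions. -/
lemma homog_lower {d : ℕ} (hd : 0 < d) (ψ : (Fin d → ℝ) → ℝ)
    (hcont : Continuous ψ) (hpos : ∀ x, x ≠ 0 → 0 < ψ x) (k : ℕ) (hk : k ≠ 0)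
    (hhom : ∀ a : ℝ, 0 ≤ a → ∀ x, ψ (a • x) = a ^ k * ψ x) :
    ∃ m > 0, ∀ x, m * ‖x‖ ^ k ≤ ψ x := by
  obtain ⟨m, hm, hmin⟩ := exists_sphere_min hd ψ hcont hpos
  refine ⟨m, hm, fun x => ?_⟩
  by_cases hx : x = 0
  · have : ψ 0 = 0 := by
      have := hhom 0 le_rfl 0
      simpa [zero_pow hk] using this
    simp [hx, this, zero_pow hk]
  · have ha : (0:ℝ) < ‖x‖ := norm_pos_iff.mpr hx
    have hy : ‖(‖x‖⁻¹ • x)‖ = 1 := by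
      rw [norm_smul, norm_inv, norm_norm, inv_mul_cancel₀ ha.ne']
    have := hmin _ hy
    have hxx : ψ x = ‖x‖ ^ k * ψ (‖x‖⁻¹ • x) := by
      rw [← hhom ‖x‖ ha.le, smul_inv_smul₀ ha.ne']
    rw [hxx, mul_comm m]
    exact mul_le_mul_of_nonneg_left this (by positivity)

/-- The zero set of a real-analytic function on `ℝ` which is not identically zero is countable. -/
lemma countable_level {h : ℝ → ℝ} (hh : AnalyticOnNhd ℝ h Set.univ)
    (hnc : ∃ r, h r ≠ 0) : {r | h r = 0}.Countable := by
  set Z := {r : ℝ | h r = 0} with hZ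
  have key : ∀ z : ℝ, z ∈ Z → 𝓝[≠] z ⊓ Filter.principal Z = ⊥ := by
    intro z hz
    rcases (hh z trivial).eventually_eq_zero_or_eventually_ne_zero with hev | hev
    · exfalso
      obtain ⟨r, hr⟩ := hnc
      exact hr (hh.eqOn_zero_of_preconnected_of_eventuallyEq_zero isPreconnected_univ
        (Set.mem_univ z) hev (Set.mem_univ r))
    · have h1 : ∀ᶠ w in 𝓝[≠] z ⊓ Filter.principal Z, h w ≠ 0 :=
        hev.filter_mono inf_le_left
      have h2 : ∀ᶠ w in 𝓝[≠] z ⊓ Filter.principal Z, w ∈ Z :=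
        (Filter.eventually_principal.mpr fun w hw => hw).filter_mono inf_le_right
      rw [← Filter.eventually_false_iff_eq_bot]
      filter_upwards [h1, h2] with w hw1 hw2
      exact hw1 hw2
  have : DiscreteTopology Z := discreteTopology_subtype_iff.mpr key
  have : Countable Z := TopologicalSpace.separableSpace_iff_countable.mp inferInstance
  exact Set.countable_coe_iff.mp this

section facts
variable {d : ℕ} (S : Matrix (Fin d) (Fin d) ℝ)

lemma qform_continuous : Continuous fun x : Fin d → ℝ => x ⬝ᵥ (S⁻¹ *ᵥ x) := by
  simp only [dotProduct, Matrix.mulVec]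
  exact continuous_finset_sum _ fun i _ => (continuous_apply i).mul
    (continuous_finset_sum _ fun j _ => continuous_const.mul (continuous_apply j))

lemma gaussDensity_continuous : Continuous (gaussDensity S) :=
  continuous_const.mul (Real.continuous_exp.comp (continuous_const.mul (qform_continuous S)))

variable {S} (hS : S.PosDef)
include hS

lemma qform_symm (v w : Fin d → ℝ) : v ⬝ᵥ (S⁻¹ *ᵥ w) = w ⬝ᵥ (S⁻¹ *ᵥ v) := by
  have hH : S⁻¹.IsHermitian := hS.inv.isHermitian
  have ht : S⁻¹ᵀ = S⁻¹ := by
    have := hH.eq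
    simpa [Matrix.conjTranspose_eq_transpose_of_trivial] using this
  calc v ⬝ᵥ (S⁻¹ *ᵥ w) = (S⁻¹ᵀ *ᵥ v) ⬝ᵥ w := by
        rw [Matrix.dotProduct_mulVec, Matrix.mulVec_transpose]
    _ = (S⁻¹ *ᵥ v) ⬝ᵥ w := by rw [ht]
    _ = w ⬝ᵥ (S⁻¹ *ᵥ v) := dotProduct_comm _ _

lemma gaussDensity_line (v e : Fin d → ℝ) (r : ℝ) :
    gaussDensity S (v - r • e)
      = gaussDensity S v * Real.exp (r * (v ⬝ᵥ (S⁻¹ *ᵥ e)))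
        * Real.exp (-((e ⬝ᵥ (S⁻¹ *ᵥ e)) / 2) * r ^ 2) := by
  have hexp : (v - r • e) ⬝ᵥ (S⁻¹ *ᵥ (v - r • e))
      = v ⬝ᵥ (S⁻¹ *ᵥ v) - 2 * r * (v ⬝ᵥ (S⁻¹ *ᵥ e)) + r ^ 2 * (e ⬝ᵥ (S⁻¹ *ᵥ e)) := by
    simp only [sub_dotProduct, dotProduct_sub, Matrix.mulVec_sub,
      Matrix.mulVec_smul, smul_dotProduct, dotProduct_smul, smul_eq_mul]
    rw [qform_symm hS e v]
    ring
  unfold gaussDensity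
  rw [hexp]
  conv_rhs => rw [mul_assoc, ← Real.exp_add, mul_assoc, ← Real.exp_add]
  congr 1
  ring

lemma gaussConst_pos : 0 < (Real.sqrt ((2 * Real.pi) ^ d * S.det))⁻¹ := by
  have h : (0:ℝ) < (2 * Real.pi) ^ d * S.det :=
    mul_pos (pow_pos (by positivity) d) hS.det_pos
  positivity

lemma qform_nonneg (x : Fin d → ℝ) : 0 ≤ x ⬝ᵥ (S⁻¹ *ᵥ x) := by
  have := hS.inv.posSemidef.dotProduct_mulVec_nonneg x
  simpa using this

lemma gaussDensity_pos (x : Fin d → ℝ) : 0 < gaussDensity S x :=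
  mul_pos (gaussConst_pos hS) (Real.exp_pos _)

lemma gaussDensity_le (x : Fin d → ℝ) :
    gaussDensity S x ≤ (Real.sqrt ((2 * Real.pi) ^ d * S.det))⁻¹ := by
  have h1 : Real.exp (-(1 / 2) * (x ⬝ᵥ (S⁻¹ *ᵥ x))) ≤ 1 := by
    rw [Real.exp_le_one_iff]
    nlinarith [qform_nonneg hS x]
  have := gaussConst_pos (d := d) hS
  calc gaussDensity S x ≤ (Real.sqrt ((2 * Real.pi) ^ d * S.det))⁻¹ * 1 :=
        mul_le_mul_of_nonneg_left h1 this.le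
    _ = _ := mul_one _

end facts

section repr
variable {d : ℕ} {φ : (Fin d → ℝ) → ℝ} (hφ : IsNorm φ)
  (S : Matrix (Fin d) (Fin d) ℝ) (c : ℝ)
include hφ

lemma ball_measurable : MeasurableSet {u : Fin d → ℝ | φ u ≤ c} :=
  (IsClosed.preimage hφ.continuous isClosed_Iic).measurableSet

lemma shifted_measurable (x : Fin d → ℝ) :
    MeasurableSet {ω : Fin d → ℝ | φ (ω + x) ≤ c} :=
  (IsClosed.preimage (hφ.continuous.comp (continuous_add_right x)) isClosed_Iic).measurableSet

lemma grepr (x : Fin d → ℝ) :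
    gaussMeasure S {ω | φ (ω + x) ≤ c}
      = ∫⁻ u, Set.indicator {u | φ u ≤ c}
          (fun u => ENNReal.ofReal (gaussDensity S (u - x))) u := by
  rw [gaussMeasure, withDensity_apply _ (shifted_measurable hφ c x),
    ← lintegral_indicator (shifted_measurable hφ c x) _,
    ← lintegral_add_right_eq_self
      (fun u => Set.indicator {u | φ u ≤ c}
        (fun u => ENNReal.ofReal (gaussDensity S (u - x))) u) x]
  congr 1; funext ω
  by_cases h : φ (ω + x) ≤ c <;>
    simp [Set.indicator, h, add_sub_cancel_right]

lemma grepr_setLIntegral (x : Fin d → ℝ) :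
    gaussMeasure S {ω | φ (ω + x) ≤ c}
      = ∫⁻ u in {u | φ u ≤ c}, ENNReal.ofReal (gaussDensity S (u - x)) := by
  rw [grepr hφ S c x, lintegral_indicator (ball_measurable hφ c) _]

lemma grepr_toReal (hS : S.PosDef) (x : Fin d → ℝ) :
    (gaussMeasure S {ω | φ (ω + x) ≤ c}).toReal
      = ∫ u in {u | φ u ≤ c}, gaussDensity S (u - x) := by
  rw [grepr_setLIntegral hφ S c x,
    ← integral_eq_lintegral_of_nonneg_ae
      (Filter.Eventually.of_forall fun u => (gaussDensity_pos hS _).le)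
      (((gaussDensity_continuous S).comp (continuous_sub_right x)).aestronglyMeasurable)]

lemma gmeas : Measurable fun x : Fin d → ℝ =>
    (gaussMeasure S {ω | φ (ω + x) ≤ c}).toReal := by
  have h0 : ∀ x : Fin d → ℝ, gaussMeasure S {ω | φ (ω + x) ≤ c}
      = ∫⁻ u, Set.indicator {p : (Fin d → ℝ) × (Fin d → ℝ) | φ p.2 ≤ c}
          (fun p => ENNReal.ofReal (gaussDensity S (p.2 - p.1))) (x, u) := by
    intro x
    rw [grepr hφ S c x]
    refine lintegral_congr fun u => ?_
    by_cases h : φ u ≤ c <;> simp [Set.indicator, h]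
  have hmeas : Measurable (Function.uncurry fun x u : Fin d → ℝ =>
      Set.indicator {p : (Fin d → ℝ) × (Fin d → ℝ) | φ p.2 ≤ c}
        (fun p => ENNReal.ofReal (gaussDensity S (p.2 - p.1))) (x, u)) := by
    have heq : (Function.uncurry fun x u : Fin d → ℝ =>
        Set.indicator {p : (Fin d → ℝ) × (Fin d → ℝ) | φ p.2 ≤ c}
          (fun p => ENNReal.ofReal (gaussDensity S (p.2 - p.1))) (x, u))
        = fun p : (Fin d → ℝ) × (Fin d → ℝ) =>
          Set.indicator {p : (Fin d → ℝ) × (Fin d → ℝ) | φ p.2 ≤ c}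
            (fun p => ENNReal.ofReal (gaussDensity S (p.2 - p.1))) p := rfl
    rw [heq]
    refine Measurable.indicator ?_ ?_
    · exact ENNReal.measurable_ofReal.comp
        ((gaussDensity_continuous S).comp (continuous_snd.sub continuous_fst)).measurable
    · exact (IsClosed.preimage (hφ.continuous.comp continuous_snd) isClosed_Iic).measurableSet
  have key : (fun x : Fin d → ℝ => (gaussMeasure S {ω | φ (ω + x) ≤ c}).toReal)
      = fun x => (∫⁻ u, Set.indicator {p : (Fin d → ℝ) × (Fin d → ℝ) | φ p.2 ≤ c}
          (fun p => ENNReal.ofReal (gaussDensity S (p.2 - p.1))) (x, u)).toReal :=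
    funext fun x => by rw [h0 x]
  rw [key]
  exact (Measurable.lintegral_prod_right hmeas).ennreal_toReal

end repr

/-- Analyticity in `r` of `∫_B A(u) e^{r b(u)} du` for bounded continuous data on a
finite-measure set. -/
lemma analytic_integral_exp {d : ℕ} {B : Set (Fin d → ℝ)} (hBm : MeasurableSet B)
    (hBfin : volume B < ⊤) (A b : (Fin d → ℝ) → ℝ)
    (hA : Continuous A) (hb : Continuous b)
    {CA Cb : ℝ} (hCA : 0 ≤ CA) (hCb : 0 ≤ Cb)
    (hAbd : ∀ u ∈ B, |A u| ≤ CA) (hbbd : ∀ u ∈ B, |b u| ≤ Cb) :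
    AnalyticOnNhd ℝ (fun r : ℝ => ∫ u in B, A u * Real.exp (r * b u)) Set.univ := by
  haveI : IsFiniteMeasure (volume.restrict B) :=
    ⟨by rwa [Measure.restrict_apply_univ]⟩
  set Fc : ℂ → ℂ := fun z => ∫ u in B, (A u : ℂ) * Complex.exp (z * (b u : ℂ)) with hFc
  have contF : ∀ z : ℂ, Continuous fun u => (A u : ℂ) * Complex.exp (z * (b u : ℂ)) :=
    fun z => (Complex.continuous_ofReal.comp hA).mul
      (Complex.continuous_exp.comp (continuous_const.mul (Complex.continuous_ofReal.comp hb)))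
  have contF' : ∀ z : ℂ, Continuous fun u => (A u : ℂ) * ((b u : ℂ) * Complex.exp (z * (b u : ℂ))) :=
    fun z => (Complex.continuous_ofReal.comp hA).mul
      ((Complex.continuous_ofReal.comp hb).mul
        (Complex.continuous_exp.comp (continuous_const.mul (Complex.continuous_ofReal.comp hb))))
  have hnorm : ∀ (z : ℂ) (u : Fin d → ℝ), u ∈ B →
      ‖(A u : ℂ) * Complex.exp (z * (b u : ℂ))‖ ≤ CA * Real.exp (‖z‖ * Cb) := by
    intro z u hu
    rw [norm_mul, Complex.norm_exp]
    have h1 : (z * (b u : ℂ)).re ≤ ‖z‖ * Cb := by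
      have hre : (z * (b u : ℂ)).re = z.re * b u := by simp
      rw [hre]
      calc z.re * b u ≤ |z.re * b u| := le_abs_self _
        _ = |z.re| * |b u| := abs_mul _ _
        _ ≤ ‖z‖ * Cb :=
            mul_le_mul (Complex.abs_re_le_norm z) (hbbd u hu) (abs_nonneg _) (norm_nonneg z)
    have h2 : ‖(A u : ℂ)‖ ≤ CA := by
      rw [Complex.norm_real, Real.norm_eq_abs]; exact hAbd u hu
    exact mul_le_mul h2 (Real.exp_le_exp.mpr h1) (Real.exp_pos _).le hCA
  have hnorm' : ∀ (z : ℂ) (u : Fin d → ℝ), u ∈ B →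
      ‖(A u : ℂ) * ((b u : ℂ) * Complex.exp (z * (b u : ℂ)))‖
        ≤ CA * (Cb * Real.exp (‖z‖ * Cb)) := by
    intro z u hu
    have h0 := hnorm z u hu
    rw [norm_mul, norm_mul] at *
    have h2 : ‖(A u : ℂ)‖ ≤ CA := by
      rw [Complex.norm_real, Real.norm_eq_abs]; exact hAbd u hu
    have h3 : ‖(b u : ℂ)‖ ≤ Cb := by
      rw [Complex.norm_real, Real.norm_eq_abs]; exact hbbd u hu
    have h4 : ‖Complex.exp (z * (b u : ℂ))‖ ≤ Real.exp (‖z‖ * Cb) := by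
      rw [Complex.norm_exp]
      refine Real.exp_le_exp.mpr ?_
      have hre : (z * (b u : ℂ)).re = z.re * b u := by simp
      rw [hre]
      calc z.re * b u ≤ |z.re * b u| := le_abs_self _
        _ = |z.re| * |b u| := abs_mul _ _
        _ ≤ ‖z‖ * Cb :=
            mul_le_mul (Complex.abs_re_le_norm z) (hbbd u hu) (abs_nonneg _) (norm_nonneg z)
    refine mul_le_mul h2 ?_ (by positivity) hCA
    exact mul_le_mul h3 h4 (norm_nonneg _) hCb
  have hderiv : ∀ z₀ : ℂ, HasDerivAt Fc
      (∫ u in B, (A u : ℂ) * ((b u : ℂ) * Complex.exp (z₀ * (b u : ℂ)))) z₀ := by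
    intro z₀
    have main := hasDerivAt_integral_of_dominated_loc_of_deriv_le
      (F := fun z (u : Fin d → ℝ) => (A u : ℂ) * Complex.exp (z * (b u : ℂ)))
      (F' := fun z (u : Fin d → ℝ) => (A u : ℂ) * ((b u : ℂ) * Complex.exp (z * (b u : ℂ))))
      (μ := volume.restrict B) (x₀ := z₀)
      (bound := fun _ => CA * (Cb * Real.exp ((‖z₀‖ + 1) * Cb)))
      (s := Metric.ball z₀ 1) (Metric.ball_mem_nhds z₀ one_pos)
      (Filter.Eventually.of_forall fun z => (contF z).aestronglyMeasurable)
      ?_ ((contF' z₀).aestronglyMeasurable) ?_ (integrable_const _) ?_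
    · exact main.2
    · refine Integrable.mono' (integrable_const (CA * Real.exp (‖z₀‖ * Cb)))
        (contF z₀).aestronglyMeasurable ?_
      exact (ae_restrict_mem hBm).mono fun u hu => hnorm z₀ u hu
    · refine (ae_restrict_mem hBm).mono fun u hu z hz => ?_
      refine (hnorm' z u hu).trans ?_
      have hz1 : ‖z‖ ≤ ‖z₀‖ + 1 := by
        have := mem_ball_iff_norm.mp hz
        calc ‖z‖ = ‖z₀ + (z - z₀)‖ := by ring_nf
          _ ≤ ‖z₀‖ + ‖z - z₀‖ := norm_add_le _ _
          _ ≤ ‖z₀‖ + 1 := by linarith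
      have : Real.exp (‖z‖ * Cb) ≤ Real.exp ((‖z₀‖ + 1) * Cb) :=
        Real.exp_le_exp.mpr (mul_le_mul_of_nonneg_right hz1 hCb)
      exact mul_le_mul_of_nonneg_left (mul_le_mul_of_nonneg_left this hCb) hCA
    · refine Filter.Eventually.of_forall fun u z hz => ?_
      have h1 : HasDerivAt (fun z : ℂ => z * (b u : ℂ)) (b u : ℂ) z := by
        simpa using (hasDerivAt_id z).mul_const (b u : ℂ)
      have h2 := h1.cexp
      have h3 := h2.const_mul (A u : ℂ)
      have e : (A u : ℂ) * ((b u : ℂ) * Complex.exp (z * (b u : ℂ)))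
          = (A u : ℂ) * (Complex.exp (z * (b u : ℂ)) * (b u : ℂ)) := by ring
      rw [← e] at h3
      exact h3
  have hFdiff : Differentiable ℂ Fc := fun z₀ => (hderiv z₀).differentiableAt
  have h1 : AnalyticOnNhd ℂ Fc Set.univ :=
    hFdiff.differentiableOn.analyticOnNhd isOpen_univ
  have h3 : AnalyticOnNhd ℝ (fun r : ℝ => Fc (r : ℂ)) Set.univ :=
    h1.restrictScalars.comp (Complex.ofRealCLM.analyticOnNhd Set.univ) (Set.mapsTo_univ _ _)
  have h4 : AnalyticOnNhd ℝ (fun r : ℝ => (Fc (r : ℂ)).re) Set.univ :=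
    (Complex.reCLM.analyticOnNhd Set.univ).comp h3 (Set.mapsTo_univ _ _)
  have hre : ∀ r : ℝ, (Fc (r : ℂ)).re = ∫ u in B, A u * Real.exp (r * b u) := by
    intro r
    have : Fc (r : ℂ) = ((∫ u in B, A u * Real.exp (r * b u) : ℝ) : ℂ) := by
      rw [hFc]
      calc (∫ u in B, (A u : ℂ) * Complex.exp ((r : ℂ) * (b u : ℂ)))
          = ∫ u in B, ((A u * Real.exp (r * b u) : ℝ) : ℂ) := by
            refine integral_congr_ae (Filter.Eventually.of_forall fun u => ?_)
            push_cast
            ring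
        _ = ((∫ u in B, A u * Real.exp (r * b u) : ℝ) : ℂ) := integral_ofReal
    rw [this, Complex.ofReal_re]
  have : (fun r : ℝ => ∫ u in B, A u * Real.exp (r * b u))
      = fun r : ℝ => (Fc (r : ℂ)).re := funext fun r => (hre r).symm
  rw [this]
  exact h4

/-- Along any line with direction `e ≠ 0`, the level set `{r : G(x₀ + r e) = t}` (for `t > 0`)
is countable. -/
lemma slice_countable {d : ℕ} (hd : 0 < d) {φ : (Fin d → ℝ) → ℝ} (hφ : IsNorm φ)
    {S : Matrix (Fin d) (Fin d) ℝ} (hS : S.PosDef) {c : ℝ} (hc : 0 < c) {t : ℝ} (ht : 0 < t)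
    (x₀ e : Fin d → ℝ) (he : e ≠ 0) :
    Set.Countable
      {r : ℝ | (gaussMeasure S {ω | φ (ω + (x₀ + r • e)) ≤ c}).toReal = t} := by
  classical
  obtain ⟨K, hK, hKle⟩ := hφ.le_K
  obtain ⟨m, hm, hmle⟩ := homog_lower hd φ hφ.continuous (fun x hx => hφ.pos hx) 1 one_ne_zero
    (fun a ha x => by rw [hφ.smul, abs_of_nonneg ha, pow_one])
  obtain ⟨lam, hlam, hlamle⟩ := homog_lower hd (fun x => x ⬝ᵥ (S⁻¹ *ᵥ x)) (qform_continuous S)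
    (fun x hx => by simpa using hS.inv.dotProduct_mulVec_pos hx) 2 two_ne_zero
    (fun a ha x => by
      simp only [Matrix.mulVec_smul, smul_dotProduct, dotProduct_smul, smul_eq_mul]
      ring)
  set C := (Real.sqrt ((2 * Real.pi) ^ d * S.det))⁻¹ with hCdef
  have hCpos : 0 < C := gaussConst_pos hS
  have hBm : MeasurableSet {u : Fin d → ℝ | φ u ≤ c} := ball_measurable hφ c
  have hBsub : {u : Fin d → ℝ | φ u ≤ c} ⊆ Metric.closedBall 0 (c / m) := by
    intro u hu
    rw [Metric.mem_closedBall, dist_zero_right]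
    have h1 := hmle u
    rw [pow_one] at h1
    have h2 : φ u ≤ c := hu
    rw [le_div_iff₀ hm]
    nlinarith
  have hBvol : volume {u : Fin d → ℝ | φ u ≤ c} < ⊤ :=
    lt_of_le_of_lt (measure_mono hBsub) (isCompact_closedBall _ _).measure_lt_top
  set A : (Fin d → ℝ) → ℝ := fun u => gaussDensity S (u - x₀) with hAdef
  set bfn : (Fin d → ℝ) → ℝ := fun u => (u - x₀) ⬝ᵥ (S⁻¹ *ᵥ e) with hbfndef
  set γ : ℝ := e ⬝ᵥ (S⁻¹ *ᵥ e) with hγdef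
  have hAcont : Continuous A := (gaussDensity_continuous S).comp (continuous_sub_right x₀)
  have hbcont : Continuous bfn := by
    have hlin : Continuous fun v : Fin d → ℝ => v ⬝ᵥ (S⁻¹ *ᵥ e) := by
      simp only [dotProduct]
      exact continuous_finset_sum _ fun i _ => (continuous_apply i).mul continuous_const
    exact hlin.comp (continuous_sub_right x₀)
  have hAbd : ∀ u ∈ {u : Fin d → ℝ | φ u ≤ c}, |A u| ≤ C := fun u _ => by
    rw [abs_of_pos (gaussDensity_pos hS _)]; exact gaussDensity_le hS _
  obtain ⟨Cb0, hCb0⟩ :=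
    (isCompact_closedBall (0 : Fin d → ℝ) (c / m)).exists_bound_of_continuousOn hbcont.continuousOn
  have hbbd : ∀ u ∈ {u : Fin d → ℝ | φ u ≤ c}, |bfn u| ≤ max Cb0 0 := fun u hu =>
    le_trans (by simpa [Real.norm_eq_abs] using hCb0 u (hBsub hu)) (le_max_left _ _)
  set g1 : ℝ → ℝ := fun r => ∫ u in {u : Fin d → ℝ | φ u ≤ c}, A u * Real.exp (r * bfn u)
    with hg1def
  have hg1a : AnalyticOnNhd ℝ g1 Set.univ :=
    analytic_integral_exp hBm hBvol A bfn hAcont hbcont hCpos.le (le_max_right _ _) hAbd hbbd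
  set g : ℝ → ℝ := fun r => g1 r * Real.exp (-(γ / 2) * r ^ 2) with hgdef
  have hga : AnalyticOnNhd ℝ g Set.univ := by
    refine hg1a.mul ?_
    intro x _
    have hpoly : AnalyticAt ℝ (fun r : ℝ => -(γ / 2) * r ^ 2) x := by
      apply AnalyticAt.mul analyticAt_const
      exact (analyticAt_id).pow 2
    exact analyticAt_rexp.comp hpoly
  have hgr : ∀ r : ℝ,
      (gaussMeasure S {ω | φ (ω + (x₀ + r • e)) ≤ c}).toReal = g r := by
    intro r
    rw [grepr_toReal hφ S c hS (x₀ + r • e)]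
    have hpt : ∀ u : Fin d → ℝ, gaussDensity S (u - (x₀ + r • e))
        = A u * Real.exp (r * bfn u) * Real.exp (-(γ / 2) * r ^ 2) := by
      intro u
      rw [sub_add_eq_sub_sub]
      exact gaussDensity_line hS (u - x₀) e r
    calc (∫ u in {u : Fin d → ℝ | φ u ≤ c}, gaussDensity S (u - (x₀ + r • e)))
        = ∫ u in {u : Fin d → ℝ | φ u ≤ c},
            A u * Real.exp (r * bfn u) * Real.exp (-(γ / 2) * r ^ 2) :=
          integral_congr_ae (Filter.Eventually.of_forall fun u => hpt u)
      _ = g r := integral_mul_const _ _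
  -- nonconstancy
  have hφe : 0 < φ e := hφ.pos he
  set P : ℝ → ℝ := fun r => r * φ e + -(φ x₀ + c) with hPdef
  have hPtop : Tendsto P atTop atTop :=
    tendsto_atTop_add_const_right _ _ (tendsto_id.atTop_mul_const hφe)
  have pointbound : ∀ r : ℝ, 0 ≤ r → 0 ≤ P r → ∀ u ∈ {u : Fin d → ℝ | φ u ≤ c},
      gaussDensity S (u - (x₀ + r • e))
        ≤ C * Real.exp (-(lam / (2 * K ^ 2)) * P r ^ 2) := by
    intro r hr hPr u hu
    set w := u - (x₀ + r • e) with hwdef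
    have hφw : P r ≤ φ w := by
      have hid : r • e = u + (-x₀ + -w) := by rw [hwdef]; abel
      have h1 : φ (r • e) ≤ φ u + (φ x₀ + φ w) := by
        rw [hid]
        refine (hφ.triangle _ _).trans ?_
        have h2 := hφ.triangle (-x₀) (-w)
        rw [hφ.neg, hφ.neg] at h2
        linarith
      rw [hφ.smul, abs_of_nonneg hr] at h1
      have hu' : φ u ≤ c := hu
      simp only [hPdef]
      linarith
    have hφw0 : 0 ≤ φ w := hφ.nonneg w
    have hnw : P r / K ≤ ‖w‖ := by
      have hKw := hKle w
      rw [div_le_iff₀ hK]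
      nlinarith
    have hQ : lam / K ^ 2 * P r ^ 2 ≤ w ⬝ᵥ (S⁻¹ *ᵥ w) := by
      have h1 := hlamle w
      have h2 : (P r / K) ^ 2 ≤ ‖w‖ ^ 2 :=
        pow_le_pow_left₀ (div_nonneg hPr hK.le) hnw 2
      have h3 : lam * (P r / K) ^ 2 ≤ lam * ‖w‖ ^ 2 :=
        mul_le_mul_of_nonneg_left h2 hlam.le
      calc lam / K ^ 2 * P r ^ 2 = lam * (P r / K) ^ 2 := by
            field_simp
        _ ≤ lam * ‖w‖ ^ 2 := h3
        _ ≤ _ := h1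
    have hgw : gaussDensity S w = C * Real.exp (-(1 / 2) * (w ⬝ᵥ (S⁻¹ *ᵥ w))) := rfl
    rw [hgw]
    refine mul_le_mul_of_nonneg_left ?_ hCpos.le
    refine Real.exp_le_exp.mpr ?_
    rw [show -(lam / (2 * K ^ 2)) * P r ^ 2
        = -(1 / 2) * (lam / K ^ 2 * P r ^ 2) from by ring]
    linarith [hQ]
  set V := (volume {u : Fin d → ℝ | φ u ≤ c}).toReal with hVdef
  have hDtend : Tendsto (fun r => C * Real.exp (-(lam / (2 * K ^ 2)) * P r ^ 2) * V)
      atTop (𝓝 0) := by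
    have h2 : Tendsto (fun r => P r ^ 2) atTop atTop :=
      (tendsto_pow_atTop two_ne_zero).comp hPtop
    have h3 : Tendsto (fun r => -(lam / (2 * K ^ 2)) * P r ^ 2) atTop atBot :=
      h2.const_mul_atTop_of_neg (neg_lt_zero.mpr (by positivity))
    have h4 := Real.tendsto_exp_atBot.comp h3
    have h5 : Tendsto (fun r => C * Real.exp (-(lam / (2 * K ^ 2)) * P r ^ 2) * V)
        atTop (𝓝 (C * 0 * V)) := (h4.const_mul C).mul_const V
    simpa using h5
  obtain ⟨r₀, hr₀D, hr₀P, hr₀0⟩ :=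
    ((hDtend.eventually_lt_const ht).and
      ((hPtop.eventually_ge_atTop 0).and (eventually_ge_atTop (0:ℝ)))).exists
  have hgr₀ : g r₀ < t := by
    have hle : g r₀ ≤ C * Real.exp (-(lam / (2 * K ^ 2)) * P r₀ ^ 2) * V := by
      calc g r₀ = ∫ u in {u : Fin d → ℝ | φ u ≤ c}, gaussDensity S (u - (x₀ + r₀ • e)) := by
            rw [← hgr r₀, grepr_toReal hφ S c hS]
        _ ≤ |∫ u in {u : Fin d → ℝ | φ u ≤ c}, gaussDensity S (u - (x₀ + r₀ • e))| :=
            le_abs_self _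
        _ = ‖∫ u in {u : Fin d → ℝ | φ u ≤ c}, gaussDensity S (u - (x₀ + r₀ • e))‖ :=
            (Real.norm_eq_abs _).symm
        _ ≤ C * Real.exp (-(lam / (2 * K ^ 2)) * P r₀ ^ 2) * V := by
            refine norm_setIntegral_le_of_norm_le_const hBvol (fun u hu => ?_)
            rw [Real.norm_eq_abs, abs_of_pos (gaussDensity_pos hS _)]
            exact pointbound r₀ hr₀0 hr₀P u hu
    linarith
  have hset : {r : ℝ | (gaussMeasure S {ω | φ (ω + (x₀ + r • e)) ≤ c}).toReal = t}
      = {r : ℝ | g r - t = 0} := by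
    ext r
    simp only [Set.mem_setOf_eq, hgr r, sub_eq_zero]
  rw [hset]
  exact countable_level (hga.sub analyticOnNhd_const) ⟨r₀, sub_ne_zero.mpr hgr₀.ne⟩

/-- For `d ≥ 1`, a norm `φ`, positive definite `Σ`, and `c > 0`, the pushforward of `μ_Σ`
under `G(x) = μ_Σ{ω : φ(ω + x) ≤ c}` has no atoms: `μ_Σ{x : G(x) = t} = 0` for every `t`. -/
theorem gaussMeasure_shift_no_atoms (d : ℕ) (hd : 0 < d)
    (φ : (Fin d → ℝ) → ℝ) (hφ : IsNorm φ)
    (S : Matrix (Fin d) (Fin d) ℝ) (hS : S.PosDef) (c : ℝ) (hc : 0 < c) (t : ℝ) :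
    gaussMeasure S
      {x : Fin d → ℝ |
        (gaussMeasure S {ω : Fin d → ℝ | φ (ω + x) ≤ c}).toReal = t} = 0 := by
  classical
  obtain ⟨m, hm, hmle⟩ := homog_lower hd φ hφ.continuous (fun x hx => hφ.pos hx) 1 one_ne_zero
    (fun a ha x => by rw [hφ.smul, abs_of_nonneg ha, pow_one])
  have hBsub : {u : Fin d → ℝ | φ u ≤ c} ⊆ Metric.closedBall 0 (c / m) := by
    intro u hu
    rw [Metric.mem_closedBall, dist_zero_right]
    have h1 := hmle u
    rw [pow_one] at h1
    have h2 : φ u ≤ c := hu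
    rw [le_div_iff₀ hm]
    nlinarith
  have hBvol : volume {u : Fin d → ℝ | φ u ≤ c} < ⊤ :=
    lt_of_le_of_lt (measure_mono hBsub) (isCompact_closedBall _ _).measure_lt_top
  rcases le_or_gt t 0 with htle | htpos
  · -- `G` is everywhere positive and finite, so the level set is empty.
    have hempty : {x : Fin d → ℝ |
        (gaussMeasure S {ω : Fin d → ℝ | φ (ω + x) ≤ c}).toReal = t} = ∅ := by
      rw [Set.eq_empty_iff_forall_notMem]
      intro x hx
      have hfin : gaussMeasure S {ω : Fin d → ℝ | φ (ω + x) ≤ c} < ⊤ := by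
        rw [grepr_setLIntegral hφ S c x]
        calc (∫⁻ u in {u : Fin d → ℝ | φ u ≤ c}, ENNReal.ofReal (gaussDensity S (u - x)))
            ≤ ∫⁻ _ in {u : Fin d → ℝ | φ u ≤ c},
                ENNReal.ofReal ((Real.sqrt ((2 * Real.pi) ^ d * S.det))⁻¹) :=
              setLIntegral_mono measurable_const
                (fun u _ => ENNReal.ofReal_le_ofReal (gaussDensity_le hS _))
          _ = ENNReal.ofReal ((Real.sqrt ((2 * Real.pi) ^ d * S.det))⁻¹)
                * volume {u : Fin d → ℝ | φ u ≤ c} := setLIntegral_const _ _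
          _ < ⊤ := ENNReal.mul_lt_top ENNReal.ofReal_lt_top hBvol
      have hpos : 0 < gaussMeasure S {ω : Fin d → ℝ | φ (ω + x) ≤ c} := by
        have hopen : IsOpen {ω : Fin d → ℝ | φ (ω + x) < c} :=
          IsOpen.preimage (hφ.continuous.comp (continuous_add_right x)) isOpen_Iio
        have hmem : -x ∈ {ω : Fin d → ℝ | φ (ω + x) < c} := by
          show φ (-x + x) < c
          rw [neg_add_cancel, hφ.zero]
          exact hc
        obtain ⟨ε, hε, hball⟩ := Metric.isOpen_iff.mp hopen (-x) hmem
        have hcomp := isCompact_closedBall (-x) (ε / 2)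
        have hne : (Metric.closedBall (-x) (ε / 2)).Nonempty :=
          ⟨-x, Metric.mem_closedBall_self (by positivity)⟩
        obtain ⟨z, hz, hzmin⟩ :=
          hcomp.exists_isMinOn hne (gaussDensity_continuous S).continuousOn
        have hδ : 0 < gaussDensity S z := gaussDensity_pos hS z
        have hsub2 : Metric.closedBall (-x) (ε / 2)
            ⊆ {ω : Fin d → ℝ | φ (ω + x) ≤ c} := fun y hy =>
          show φ (y + x) ≤ c from
            le_of_lt (hball (Metric.closedBall_subset_ball (by linarith) hy))
        calc (0:ℝ≥0∞)
            < ENNReal.ofReal (gaussDensity S z) * volume (Metric.closedBall (-x) (ε / 2)) :=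
              ENNReal.mul_pos (by simpa using (ENNReal.ofReal_pos.mpr hδ).ne')
                (Metric.measure_closedBall_pos volume _ (by positivity)).ne'
          _ = ∫⁻ _ in Metric.closedBall (-x) (ε / 2), ENNReal.ofReal (gaussDensity S z) :=
              (setLIntegral_const _ _).symm
          _ ≤ ∫⁻ u in Metric.closedBall (-x) (ε / 2), ENNReal.ofReal (gaussDensity S u) :=
              setLIntegral_mono
                (ENNReal.measurable_ofReal.comp (gaussDensity_continuous S).measurable)
                (fun u hu => ENNReal.ofReal_le_ofReal (hzmin hu))
          _ ≤ ∫⁻ u in {ω : Fin d → ℝ | φ (ω + x) ≤ c}, ENNReal.ofReal (gaussDensity S u) :=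
              lintegral_mono_set hsub2
          _ = gaussMeasure S {ω : Fin d → ℝ | φ (ω + x) ≤ c} := by
              rw [gaussMeasure, withDensity_apply _ (shifted_measurable hφ c x)]
      have hpos' := ENNReal.toReal_pos hpos.ne' hfin.ne
      rw [hx] at hpos'
      linarith
    rw [hempty]
    exact measure_empty
  · -- main case: Fubini along the first coordinate direction.
    have hGmeas := gmeas hφ S c
    have hAm : MeasurableSet {x : Fin d → ℝ |
        (gaussMeasure S {ω : Fin d → ℝ | φ (ω + x) ≤ c}).toReal = t} :=
      hGmeas (measurableSet_singleton t)
    have hvolA : volume {x : Fin d → ℝ |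
        (gaussMeasure S {ω : Fin d → ℝ | φ (ω + x) ≤ c}).toReal = t} = 0 := by
      obtain ⟨n, rfl⟩ : ∃ n, d = n + 1 := ⟨d - 1, (Nat.succ_pred_eq_of_pos hd).symm⟩
      set Aset := {x : Fin (n + 1) → ℝ |
        (gaussMeasure S {ω : Fin (n + 1) → ℝ | φ (ω + x) ≤ c}).toReal = t} with hAsetdef
      set em := MeasurableEquiv.piFinSuccAbove (fun _ : Fin (n + 1) => ℝ) 0 with hem
      have hp := measurePreserving_piFinSuccAbove (fun _ : Fin (n + 1) => (volume : Measure ℝ)) 0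
      have hsm : MeasurableSet (em.symm ⁻¹' Aset) := em.symm.measurable hAm
      have hAA : em ⁻¹' (em.symm ⁻¹' Aset) = Aset := by
        ext y; simp
      have h1 : volume Aset
          = ((volume : Measure ℝ).prod
              (Measure.pi fun _ : Fin n => (volume : Measure ℝ))) (em.symm ⁻¹' Aset) := by
        have h2 := hp.measure_preimage hsm.nullMeasurableSet
        rw [hAA] at h2
        rw [volume_pi]
        exact h2
      rw [h1, Measure.prod_apply_symm hsm]
      have hsingle_ne : (Pi.single (0 : Fin (n + 1)) (1:ℝ) : Fin (n + 1) → ℝ) ≠ 0 := by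
        intro h
        have := congrFun h 0
        simp at this
      have hslice : ∀ y : Fin n → ℝ,
          (volume : Measure ℝ) ((fun r => (r, y)) ⁻¹' (em.symm ⁻¹' Aset)) = 0 := by
        intro y
        have hline : ∀ r : ℝ,
            em.symm (r, y) = em.symm (0, y) + r • (Pi.single 0 1 : Fin (n + 1) → ℝ) := by
          intro r
          have hsymm : ∀ a : ℝ, em.symm (a, y) = Fin.insertNth 0 a y := fun a => rfl
          rw [hsymm r, hsymm 0]
          ext i
          refine Fin.cases ?_ (fun j => ?_) i
          · simp [Fin.insertNth_apply_same]
          · have h0 : (0 : Fin (n + 1)).succAbove j = j.succ := by simp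
            rw [← h0]
            simp only [Pi.add_apply, Pi.smul_apply, Fin.insertNth_apply_succAbove, h0,
              smul_eq_mul]
            simp [Pi.single_eq_of_ne (Fin.succ_ne_zero j)]
        have hsliceeq : ((fun r => (r, y)) ⁻¹' (em.symm ⁻¹' Aset))
            = {r : ℝ | (gaussMeasure S {ω : Fin (n + 1) → ℝ |
                φ (ω + (em.symm (0, y) + r • (Pi.single 0 1 : Fin (n + 1) → ℝ))) ≤ c}).toReal
                = t} := by
          ext r
          simp only [Set.mem_preimage, hAsetdef, Set.mem_setOf_eq, hline r]
        rw [hsliceeq]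
        exact Set.Countable.measure_zero
          (slice_countable hd hφ hS hc htpos (em.symm (0, y)) _ hsingle_ne) volume
      calc (∫⁻ y, (volume : Measure ℝ) ((fun r => (r, y)) ⁻¹' (em.symm ⁻¹' Aset))
              ∂(Measure.pi fun _ : Fin n => (volume : Measure ℝ)))
          = ∫⁻ _, 0 ∂(Measure.pi fun _ : Fin n => (volume : Measure ℝ)) :=
            lintegral_congr hslice
        _ = 0 := lintegral_zero
    have hfin := withDensity_apply (μ := volume) (fun x => ENNReal.ofReal (gaussDensity S x)) hAm
    exact hfin.trans (setLIntegral_measure_zero _ _ hvolA)
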